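/- Let n ≥ 0 and r ≥ 2 be integers. Then the total number of different part sizes in all r-regular partitions of n equals the number of pairs (μ, i) with i ≥ 1 an integer not divisible by r and μ an r-flat partition of n − i: Σ_{λ∈O_r(n)} ℓ̄(λ) = #{(μ, i) : i ≥ 1, r ∤ i, μ ∈ F_r(n − i)}. -/

import Mathlib

open scoped Classical

namespace BeckPaper

/-- The parts of a partition, sorted in non-increasing order. -/
def partsList {n : ℕ} (p : n.Partition) : List ℕ := p.parts.sort (· ≥ ·)

/-- The `i`-th part of a partition (`1`-indexed); `0` if `i` exceeds the number of parts. -/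
def part {n : ℕ} (p : n.Partition) (i : ℕ) : ℕ := (partsList p).getD (i - 1) 0

/-- `ℓ(λ)`: the number of parts of `λ`. -/
def numParts {n : ℕ} (p : n.Partition) : ℕ := Multiset.card p.parts

/-- `ℓ_t(λ)`: the number of parts of `λ` congruent to `t` modulo `r`. -/
def lMod (r t : ℕ) {n : ℕ} (p : n.Partition) : ℕ :=
  Multiset.card (p.parts.filter (fun x => x % r = t % r))

/-- `ℓ̄_t(λ)`: the number of different part sizes appearing at least `t` times in `λ`. -/
def lRep (t : ℕ) {n : ℕ} (p : n.Partition) : ℕ :=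
  (p.parts.toFinset.filter (fun s => t ≤ p.parts.count s)).card

/-- `ℓ̄(λ)`: the number of different part sizes of `λ`. -/
def lDist {n : ℕ} (p : n.Partition) : ℕ := p.parts.toFinset.card

/-- `d_t(λ)`: the number of indices `1 ≤ i ≤ ℓ(λ)` with `λ_i − λ_{i+1} ≥ t`. -/
def dCount (t : ℕ) {n : ℕ} (p : n.Partition) : ℕ :=
  ((Finset.Icc 1 (numParts p)).filter (fun i => t ≤ part p i - part p (i + 1))).card

/-- `λ ∈ O_r(n)`: no part is divisible by `r`. -/
def IsRegular (r : ℕ) {n : ℕ} (p : n.Partition) : Prop := ∀ x ∈ p.parts, ¬ r ∣ x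

/-- `λ ∈ D_r(n)`: no part appears more than `r − 1` times. -/
def IsRestricted (r : ℕ) {n : ℕ} (p : n.Partition) : Prop :=
  ∀ s : ℕ, p.parts.count s ≤ r - 1

/-- `λ ∈ F_r(n)`: all differences of consecutive parts (with `λ_{k+1} = 0`) are `≤ r − 1`. -/
def IsFlat (r : ℕ) {n : ℕ} (p : n.Partition) : Prop :=
  ∀ i, 1 ≤ i → i ≤ numParts p → part p i - part p (i + 1) ≤ r - 1

/-- `λ ∈ O_{1,r}(n)`: the set of part sizes divisible by `r` has exactly one element. -/
def IsOneRegular (r : ℕ) {n : ℕ} (p : n.Partition) : Prop :=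
  (p.parts.toFinset.filter (fun s => r ∣ s)).card = 1

/-- `λ ∈ D_{1,r}(n)`: exactly one part size appears at least `r` times. -/
def IsOneRestricted (r : ℕ) {n : ℕ} (p : n.Partition) : Prop :=
  (p.parts.toFinset.filter (fun s => r ≤ p.parts.count s)).card = 1

/-- `λ ∈ F_{1,r}(n)`: exactly one difference of consecutive parts is `≥ r`, and all
other such differences are `≤ r − 1`. -/
def IsOneFlat (r : ℕ) {n : ℕ} (p : n.Partition) : Prop :=
  ∃ i, (1 ≤ i ∧ i ≤ numParts p ∧ r ≤ part p i - part p (i + 1)) ∧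
    ∀ j, 1 ≤ j → j ≤ numParts p → j ≠ i → part p j - part p (j + 1) ≤ r - 1

/-- `λ ∈ T_r(n)`: exactly one part size has multiplicity at least `r`, and that
multiplicity is strictly less than `2r`. -/
def IsInT (r : ℕ) {n : ℕ} (p : n.Partition) : Prop :=
  ∃ s : ℕ, (r ≤ p.parts.count s ∧ p.parts.count s < 2 * r) ∧
    ∀ s' : ℕ, r ≤ p.parts.count s' → s' = s

open Multiset

/-- number of parts of `p` that are `≥ j`. -/
def fCard {n : ℕ} (p : n.Partition) (j : ℕ) : ℕ :=
  Multiset.card (p.parts.filter (fun x => j ≤ x))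

lemma partsList_sorted {n : ℕ} (p : n.Partition) : (partsList p).Pairwise (· ≥ ·) :=
  Multiset.pairwise_sort _ _

lemma coe_partsList {n : ℕ} (p : n.Partition) : (↑(partsList p) : Multiset ℕ) = p.parts :=
  Multiset.sort_eq _ _

lemma length_partsList {n : ℕ} (p : n.Partition) : (partsList p).length = numParts p := by
  rw [numParts, ← coe_partsList p]; simp

lemma getD_sorted_iff {L : List ℕ} (hL : L.Pairwise (· ≥ ·)) {j : ℕ} (hj : 1 ≤ j) (k : ℕ) :
    j ≤ L.getD k 0 ↔ k < (L.filter (fun x => j ≤ x)).length := by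
  induction L generalizing k with
  | nil => simp; omega
  | cons a L ih =>
    rw [List.pairwise_cons] at hL
    obtain ⟨ha, hL⟩ := hL
    by_cases h : j ≤ a
    · cases k with
      | zero => simpa [List.filter_cons, h] using h
      | succ k =>
        rw [List.getD_cons_succ, ih hL k, List.filter_cons]
        simp [h]
    · have hfil : L.filter (fun x => j ≤ x) = [] := by
        rw [List.filter_eq_nil_iff]
        intro x hx
        have := ha x hx
        simp only [decide_eq_true_eq]
        omega
      have hfil2 : (a :: L).filter (fun x => j ≤ x) = [] := by
        rw [List.filter_cons]
        simp [h, hfil]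
      rw [hfil2]
      cases k with
      | zero => simp [h]
      | succ k =>
        simp only [List.getD_cons_succ, List.length_nil]
        rw [ih hL k, hfil]
        simp

lemma fCard_eq_length {n : ℕ} (p : n.Partition) (j : ℕ) :
    fCard p j = ((partsList p).filter (fun x => j ≤ x)).length := by
  rw [fCard, ← coe_partsList p]
  simp

lemma part_le_iff {n : ℕ} {p : n.Partition} {i j : ℕ} (hi : 1 ≤ i) (hj : 1 ≤ j) :
    j ≤ part p i ↔ i ≤ fCard p j := by
  rw [part, getD_sorted_iff (partsList_sorted p) hj, fCard_eq_length]
  omega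

lemma mem_le_part_one {n : ℕ} {p : n.Partition} {x : ℕ} (hx : x ∈ p.parts) :
    x ≤ part p 1 := by
  have hx1 : 1 ≤ x := p.parts_pos hx
  rw [part_le_iff le_rfl hx1]
  rw [fCard]
  have : x ∈ p.parts.filter (fun y => x ≤ y) := by
    rw [Multiset.mem_filter]; exact ⟨hx, le_rfl⟩
  exact Multiset.card_pos_iff_exists_mem.2 ⟨x, this⟩

lemma part_anti {n : ℕ} (p : n.Partition) {i i' : ℕ} (hi : 1 ≤ i) (hii : i ≤ i') :
    part p i' ≤ part p i := by
  rcases Nat.eq_zero_or_pos (part p i') with h | h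
  · omega
  · have h1 : part p i' ≤ part p i' := le_rfl
    rw [part_le_iff (by omega) h] at h1
    have h2 : i ≤ fCard p (part p i') := le_trans hii h1
    rw [← part_le_iff hi h] at h2
    exact h2

lemma fCard_pos_iff {n : ℕ} {p : n.Partition} {j : ℕ} (hj : 1 ≤ j) :
    1 ≤ fCard p j ↔ j ≤ part p 1 := (part_le_iff le_rfl hj).symm

lemma part_pos_iff {n : ℕ} {p : n.Partition} {i : ℕ} (hi : 1 ≤ i) :
    1 ≤ part p i ↔ i ≤ numParts p := by
  rw [part_le_iff hi le_rfl]
  have : fCard p 1 = numParts p := by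
    rw [fCard, numParts]
    congr 1
    rw [Multiset.filter_eq_self]
    intro x hx; exact p.parts_pos hx
  rw [this]

lemma count_parts_eq {n : ℕ} (p : n.Partition) {j : ℕ} (hj : 1 ≤ j) :
    fCard p j = p.parts.count j + fCard p (j + 1) := by
  rw [fCard, fCard]
  induction p.parts using Multiset.induction_on with
  | empty => simp
  | cons a s ih =>
    rw [Multiset.filter_cons, Multiset.filter_cons, Multiset.count_cons,
      Multiset.card_add, Multiset.card_add, ih]
    split_ifs <;> simp_all <;> omega

lemma fCard_anti {n : ℕ} (p : n.Partition) {j j' : ℕ} (h : j ≤ j') :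
    fCard p j' ≤ fCard p j := by
  apply Multiset.card_le_card
  apply Multiset.monotone_filter_right
  intro x hx
  omega

lemma filter_range_le {c N : ℕ} (h : c ≤ N) :
    (List.range N).filter (fun k => decide (k + 1 ≤ c)) = List.range c := by
  induction N with
  | zero =>
    have : c = 0 := by omega
    subst this; rfl
  | succ N ih =>
    rw [List.range_succ, List.filter_append]
    by_cases hc : c ≤ N
    · rw [ih hc]
      have : List.filter (fun k => decide (k + 1 ≤ c)) [N] = [] := by
        simp; omega
      rw [this, List.append_nil]
    · have hcN : c = N + 1 := by omega
      subst hcN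
      rw [List.range_succ]
      congr 1
      · rw [List.filter_eq_self]
        intro a ha
        rw [List.mem_range] at ha
        simp; omega
      · simp

def conjL {n : ℕ} (p : n.Partition) : List ℕ :=
  (List.range (part p 1)).map (fun k => fCard p (k + 1))

lemma conjL_sorted {n : ℕ} (p : n.Partition) : (conjL p).Pairwise (· ≥ ·) := by
  rw [conjL, List.pairwise_map]
  exact (List.pairwise_lt_range ..).imp (fun {a b} h => fCard_anti p (by omega))

lemma card_filter_eq_sum_map (s : Multiset ℕ) (q : ℕ → Prop) [DecidablePred q] :
    Multiset.card (s.filter q) = (s.map (fun x => if q x then 1 else 0)).sum := by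
  induction s using Multiset.induction_on with
  | empty => simp
  | cons a s ih =>
    rw [Multiset.filter_cons, Multiset.map_cons, Multiset.sum_cons, Multiset.card_add, ih]
    split_ifs <;> simp

lemma sum_map_finset_sum (s : Multiset ℕ) (N : ℕ) (g : ℕ → ℕ → ℕ) :
    (s.map (fun x => ∑ k ∈ Finset.range N, g k x)).sum
      = ∑ k ∈ Finset.range N, (s.map (g k)).sum := by
  induction s using Multiset.induction_on with
  | empty => simp
  | cons a s ih => simp [ih, Finset.sum_add_distrib]

lemma sum_indicator_range {x N : ℕ} (hx : x ≤ N) :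
    (∑ k ∈ Finset.range N, if k + 1 ≤ x then 1 else 0) = x := by
  have h1 : (Finset.range N).filter (fun k => k + 1 ≤ x) = Finset.range x := by
    ext k
    simp only [Finset.mem_filter, Finset.mem_range]
    omega
  rw [← Finset.sum_filter, h1]
  simp

lemma conjL_sum {n : ℕ} (p : n.Partition) : (conjL p).sum = n := by
  have h1 : (conjL p).sum = ∑ k ∈ Finset.range (part p 1), fCard p (k + 1) := by
    rfl
  rw [h1]
  have h2 : ∀ k, fCard p (k + 1)
      = (p.parts.map (fun x => if k + 1 ≤ x then 1 else 0)).sum := by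
    intro k; exact card_filter_eq_sum_map _ _
  calc ∑ k ∈ Finset.range (part p 1), fCard p (k + 1)
      = ∑ k ∈ Finset.range (part p 1),
          (p.parts.map (fun x => if k + 1 ≤ x then 1 else 0)).sum := by
        exact Finset.sum_congr rfl (fun k _ => h2 k)
    _ = (p.parts.map (fun x => ∑ k ∈ Finset.range (part p 1),
          if k + 1 ≤ x then 1 else 0)).sum := (sum_map_finset_sum _ _ _).symm
    _ = (p.parts.map id).sum := by
        congr 1
        apply Multiset.map_congr rfl
        intro x hx
        exact sum_indicator_range (mem_le_part_one hx)
    _ = n := by rw [Multiset.map_id, p.parts_sum]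

def conj {n : ℕ} (p : n.Partition) : n.Partition where
  parts := ↑(conjL p)
  parts_pos := by
    intro i hi
    rw [Multiset.mem_coe, conjL, List.mem_map] at hi
    obtain ⟨k, hk, rfl⟩ := hi
    rw [List.mem_range] at hk
    have : k + 1 ≤ part p 1 := by omega
    rw [Nat.lt_iff_add_one_le, zero_add]
    rw [fCard_pos_iff (by omega)]
    exact this
  parts_sum := by rw [Multiset.sum_coe, conjL_sum]

lemma partsList_conj {n : ℕ} (p : n.Partition) : partsList (conj p) = conjL p := by
  apply List.Perm.eq_of_pairwise' (partsList_sorted _) (conjL_sorted p)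
  rw [← Multiset.coe_eq_coe, coe_partsList]
  rfl

lemma numParts_conj {n : ℕ} (p : n.Partition) : numParts (conj p) = part p 1 := by
  rw [← length_partsList, partsList_conj, conjL, List.length_map, List.length_range]

lemma part_conj {n : ℕ} (p : n.Partition) {i : ℕ} (hi : 1 ≤ i) :
    part (conj p) i = fCard p i := by
  rw [part, partsList_conj, conjL]
  by_cases h : i ≤ part p 1
  · rw [List.getD_eq_getElem _ _ (by simp; omega)]
    simp only [List.getElem_map, List.getElem_range]
    congr 1
    omega
  · rw [List.getD_eq_default _ _ (by simp; omega)]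
    by_contra hne
    have h0 : 1 ≤ fCard p i := by omega
    rw [fCard_pos_iff hi] at h0
    omega

lemma fCard_conj {n : ℕ} (p : n.Partition) {j : ℕ} (hj : 1 ≤ j) :
    fCard (conj p) j = part p j := by
  have hN : part p j ≤ part p 1 := part_anti p le_rfl hj
  rw [fCard_eq_length, partsList_conj, conjL, List.filter_map]
  rw [List.length_map]
  have h1 : ∀ k, ((fun x => decide (j ≤ x)) ∘ (fun k => fCard p (k + 1))) k
      = decide (k + 1 ≤ part p j) := by
    intro k
    simp only [Function.comp_apply, decide_eq_decide]
    exact ((part_le_iff hj (by omega)).symm)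
  rw [List.filter_congr (fun k _ => h1 k)]
  rw [filter_range_le hN, List.length_range]

lemma ext_part {n : ℕ} {p q : n.Partition} (h : ∀ i, 1 ≤ i → part p i = part q i) :
    p = q := by
  have hf : ∀ j, 1 ≤ j → fCard p j = fCard q j := by
    intro j hj
    have key : ∀ (p' q' : n.Partition), (∀ i, 1 ≤ i → part p' i = part q' i) →
        fCard p' j ≤ fCard q' j := by
      intro p' q' h'
      rcases Nat.eq_zero_or_pos (fCard p' j) with h0 | h0
      · omega
      · have h1 : fCard p' j ≤ fCard p' j := le_rfl
        rw [← part_le_iff h0 hj] at h1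
        rw [h' _ h0] at h1
        rw [part_le_iff h0 hj] at h1
        exact h1
    exact le_antisymm (key p q h) (key q p (fun i hi => (h i hi).symm))
  have hc : ∀ s, p.parts.count s = q.parts.count s := by
    intro s
    rcases Nat.eq_zero_or_pos s with rfl | hs
    · rw [Multiset.count_eq_zero_of_notMem, Multiset.count_eq_zero_of_notMem]
      · intro h0; exact absurd (q.parts_pos h0) (by omega)
      · intro h0; exact absurd (p.parts_pos h0) (by omega)
    · have e1 := count_parts_eq p hs
      have e2 := count_parts_eq q hs
      have := hf s hs
      have := hf (s + 1) (by omega)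
      omega
  exact Nat.Partition.ext (Multiset.ext.2 hc)

lemma conj_conj {n : ℕ} (p : n.Partition) : conj (conj p) = p := by
  apply ext_part
  intro i hi
  rw [part_conj _ hi, fCard_conj _ hi]

lemma restricted_iff_flat_conj {r n : ℕ} {p : n.Partition} :
    IsRestricted r p ↔ IsFlat r (conj p) := by
  have hcnt : ∀ i, 1 ≤ i → part (conj p) i - part (conj p) (i + 1) = p.parts.count i := by
    intro i hi
    rw [part_conj p hi, part_conj p (by omega)]
    have := count_parts_eq p hi
    omega
  constructor
  · intro h i hi _
    rw [hcnt i hi]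
    exact h i
  · intro h s
    rcases Nat.eq_zero_or_pos s with rfl | hs
    · rw [Multiset.count_eq_zero_of_notMem]
      · omega
      · intro h0; exact absurd (p.parts_pos h0) (by omega)
    · by_cases hsN : s ≤ numParts (conj p)
      · have := h s hs hsN
        rw [hcnt s hs] at this
        exact this
      · rw [numParts_conj] at hsN
        rw [Multiset.count_eq_zero_of_notMem]
        · omega
        · intro h0
          exact hsN (mem_le_part_one h0)

lemma flat_iff_restricted_conj {r n : ℕ} {p : n.Partition} :
    IsFlat r p ↔ IsRestricted r (conj p) := by
  have := restricted_iff_flat_conj (r := r) (p := conj p)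
  rw [conj_conj] at this
  exact this.symm

lemma map_id'' (s : Multiset ℕ) : Multiset.map (fun a => a) s = s := by
  induction s using Multiset.induction_on <;> simp

lemma msum_bind (s : Multiset ℕ) (f : ℕ → Multiset ℕ) :
    (s.bind f).sum = (s.map (fun a => (f a).sum)).sum := by
  induction s using Multiset.induction_on with
  | empty => simp
  | cons a s ih => simp [ih]

lemma sum_map_ite_eq (s : Multiset ℕ) (c w : ℕ) :
    (s.map (fun x => if x = c then w else 0)).sum = w * s.count c := by
  induction s using Multiset.induction_on with
  | empty => simp
  | cons a s ih =>
    rw [Multiset.map_cons, Multiset.sum_cons, ih, Multiset.count_cons]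
    by_cases h : a = c
    · subst h; simp [Nat.mul_add]; ring
    · have : ¬ c = a := fun hh => h hh.symm
      simp [h, this]

lemma maxPowDiv_mul_pow {r a j : ℕ} (hr : 2 ≤ r) (ha : ¬ r ∣ a) :
    r.maxPowDiv (a * r ^ j) = j := by
  have ha0 : 0 < a := by
    rcases Nat.eq_zero_or_pos a with rfl | h
    · exact absurd (dvd_zero r) ha
    · exact h
  have h0 : r.maxPowDiv a = 0 := by
    by_contra h
    have h1 : 1 ≤ r.maxPowDiv a := by omega
    have : r ^ 1 ∣ a := dvd_trans (pow_dvd_pow r h1) (Nat.maxPowDiv.pow_dvd (p := r) (n := a))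
    rw [pow_one] at this
    exact ha this
  rw [mul_comm, show r.maxPowDiv (r ^ j * a) = r.maxPowDiv a + j from
    Nat.maxPowDiv.base_pow_mul (by omega) (by omega) j, h0, zero_add]

lemma div_pow_maxPowDiv_mul {r s : ℕ} : s / r ^ r.maxPowDiv s * r ^ r.maxPowDiv s = s :=
  Nat.div_mul_cancel (Nat.maxPowDiv.pow_dvd (p := r) (n := s))

lemma not_dvd_div_maxPowDiv {r s : ℕ} (hr : 2 ≤ r) (hs : s ≠ 0) :
    ¬ r ∣ s / r ^ r.maxPowDiv s := by
  intro hdvd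
  obtain ⟨c, hc⟩ := hdvd
  have hd := div_pow_maxPowDiv_mul (r := r) (s := s)
  have hs2 : s = r ^ (r.maxPowDiv s + 1) * c := by
    calc s = s / r ^ r.maxPowDiv s * r ^ r.maxPowDiv s := hd.symm
    _ = r * c * r ^ r.maxPowDiv s := by rw [hc]
    _ = r ^ (r.maxPowDiv s + 1) * c := by ring
  have : r.maxPowDiv s + 1 ≤ r.maxPowDiv s :=
    (Nat.pow_dvd_iff_le_padicValNat (by omega : r ≠ 1) (by omega : s ≠ 0)).1 ⟨c, hs2⟩
  omega

lemma pow_maxPowDiv_pos (r s : ℕ) : 0 < r ^ r.maxPowDiv s := by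
  rcases Nat.eq_zero_or_pos r with rfl | h
  · rw [show Nat.maxPowDiv 0 s = 0 from Nat.maxPowDiv.zero_base s]; simp
  · positivity

lemma div_maxPowDiv_pos {r s : ℕ} (hs : 0 < s) : 0 < s / r ^ r.maxPowDiv s := by
  apply Nat.div_pos (Nat.le_of_dvd hs (Nat.maxPowDiv.pow_dvd (p := r) (n := s))) (pow_maxPowDiv_pos r s)

/-- The Glaisher map sending any partition to an `r`-regular one
(splitting each part `a * r^j`, `r ∤ a`, into `r^j` copies of `a`). -/
def gl (r : ℕ) {n : ℕ} (p : n.Partition) : n.Partition where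
  parts := p.parts.bind (fun s => Multiset.replicate (r ^ r.maxPowDiv s) (s / r ^ r.maxPowDiv s))
  parts_pos := by
    intro x hx
    rw [Multiset.mem_bind] at hx
    obtain ⟨s, hs, hx⟩ := hx
    rw [Multiset.eq_of_mem_replicate hx]
    exact div_maxPowDiv_pos (p.parts_pos hs)
  parts_sum := by
    rw [msum_bind]
    rw [show (fun a => (Multiset.replicate (r ^ r.maxPowDiv a) (a / r ^ r.maxPowDiv a)).sum)
        = fun a => a / r ^ r.maxPowDiv a * r ^ r.maxPowDiv a from ?_]
    · have h1 : (Multiset.map (fun a => a / r ^ r.maxPowDiv a * r ^ r.maxPowDiv a) p.parts)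
          = p.parts := by
        rw [Multiset.map_congr rfl (fun x _ => div_pow_maxPowDiv_mul)]
        simp
      rw [h1, p.parts_sum]
    · funext a
      rw [Multiset.sum_replicate, smul_eq_mul, mul_comm]

lemma gl_regular {r n : ℕ} (hr : 2 ≤ r) (p : n.Partition) : IsRegular r (gl r p) := by
  intro x hx
  rw [gl] at hx
  simp only [Multiset.mem_bind] at hx
  obtain ⟨s, hs, hx⟩ := hx
  rw [Multiset.eq_of_mem_replicate hx]
  exact not_dvd_div_maxPowDiv hr (by have := p.parts_pos hs; omega)

lemma parts_le_n {n : ℕ} (p : n.Partition) {x : ℕ} (hx : x ∈ p.parts) : x ≤ n := by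
  rw [← p.parts_sum]
  exact Multiset.le_sum_of_mem hx

lemma count_gl {r n : ℕ} (hr : 2 ≤ r) (p : n.Partition) {b : ℕ} (hb : ¬ r ∣ b) {J : ℕ}
    (hJ : ∀ s ∈ p.parts, s < r ^ J) :
    Multiset.count b (gl r p).parts
      = ∑ j ∈ Finset.range J, r ^ j * Multiset.count (b * r ^ j) p.parts := by
  have hb0 : 0 < b := by
    rcases Nat.eq_zero_or_pos b with rfl | h
    · exact absurd (dvd_zero r) hb
    · exact h
  rw [gl, Multiset.count_bind]
  have step1 : ∀ s ∈ p.parts,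
      Multiset.count b (Multiset.replicate (r ^ r.maxPowDiv s) (s / r ^ r.maxPowDiv s))
        = ∑ j ∈ Finset.range J, if s = b * r ^ j then r ^ j else 0 := by
    intro s hs
    have hs0 : 0 < s := p.parts_pos hs
    rw [Multiset.count_replicate]
    by_cases h : s / r ^ r.maxPowDiv s = b
    · rw [if_pos h]
      have hdecomp : s = b * r ^ r.maxPowDiv s := by
        conv_lhs => rw [← div_pow_maxPowDiv_mul (r := r) (s := s)]
        rw [h]
      have hvJ : r.maxPowDiv s < J := by
        have h1 : r ^ r.maxPowDiv s ≤ s := Nat.le_of_dvd hs0 (Nat.maxPowDiv.pow_dvd (p := r) (n := s))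
        have h2 : s < r ^ J := hJ s hs
        by_contra hcon
        have : r ^ J ≤ r ^ r.maxPowDiv s :=
          Nat.pow_le_pow_right (by omega) (by omega)
        omega
      have hcond : ∀ j, (s = b * r ^ j) ↔ j = r.maxPowDiv s := by
        intro j
        constructor
        · intro hj
          rw [hj]
          exact (maxPowDiv_mul_pow hr hb).symm
        · intro hj; rw [hj]; exact hdecomp
      rw [Finset.sum_congr rfl (fun j _ => by rw [if_congr (hcond j) rfl rfl])]
      rw [Finset.sum_ite_eq' (Finset.range J) (r.maxPowDiv s) (fun j => r ^ j)]
      rw [if_pos (Finset.mem_range.2 hvJ)]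
    · rw [if_neg h]
      symm
      apply Finset.sum_eq_zero
      intro j _
      rw [if_neg]
      intro hj
      apply h
      rw [hj, maxPowDiv_mul_pow hr hb,
        Nat.mul_div_cancel _ (Nat.pow_pos (by omega : 0 < r))]
  rw [Multiset.map_congr rfl step1]
  rw [sum_map_finset_sum p.parts J (fun j s => if s = b * r ^ j then r ^ j else 0)]
  apply Finset.sum_congr rfl
  intro j _
  rw [sum_map_ite_eq]

def dg (r j m : ℕ) : ℕ := (Nat.digits r m).getD j 0

lemma dg_lt {r : ℕ} (hr : 2 ≤ r) (j m : ℕ) : dg r j m < r := by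
  rw [dg]
  by_cases h : j < (Nat.digits r m).length
  · rw [List.getD_eq_getElem _ _ h]
    exact Nat.digits_lt_base (by omega) (List.getElem_mem h)
  · rw [List.getD_eq_default _ _ (by omega)]
    omega

lemma sum_getD_eq_ofDigits (r : ℕ) (L : List ℕ) :
    ∑ j ∈ Finset.range L.length, L.getD j 0 * r ^ j = Nat.ofDigits r L := by
  induction L with
  | nil => simp
  | cons a L ih =>
    rw [List.length_cons, Finset.sum_range_succ', Nat.ofDigits_cons]
    simp only [List.getD_cons_succ, List.getD_cons_zero, pow_zero, mul_one]
    rw [← ih]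
    rw [Finset.mul_sum]
    rw [add_comm]
    congr 1
    apply Finset.sum_congr rfl
    intro j _
    ring

lemma sum_getD_eq_ofDigits' (r : ℕ) (L : List ℕ) {N : ℕ} (h : L.length ≤ N) :
    ∑ j ∈ Finset.range N, L.getD j 0 * r ^ j = Nat.ofDigits r L := by
  rw [← sum_getD_eq_ofDigits r L]
  symm
  apply Finset.sum_subset (Finset.range_subset_range.2 h)
  intro j _ hj
  rw [Finset.mem_range] at hj
  rw [List.getD_eq_default _ _ (by omega)]
  simp

lemma digits_length_le {r m N : ℕ} (hr : 2 ≤ r) (h : m < r ^ N) :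
    (Nat.digits r m).length ≤ N := by
  rcases Nat.eq_zero_or_pos m with rfl | hm
  · simp
  · rw [Nat.digits_len r m (by omega) (by omega)]
    have := (Nat.log_lt_iff_lt_pow (by omega : 1 < r) (by omega : m ≠ 0)).2 h
    omega

lemma dg_sum {r m N : ℕ} (hr : 2 ≤ r) (h : m < r ^ N) :
    ∑ j ∈ Finset.range N, dg r j m * r ^ j = m := by
  have := sum_getD_eq_ofDigits' r (Nat.digits r m) (digits_length_le hr h)
  rw [Nat.ofDigits_digits] at this
  exact this

lemma dg_eq_zero_of_lt {r m j : ℕ} (hr : 2 ≤ r) (h : m < r ^ j) : dg r j m = 0 := by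
  rw [dg, List.getD_eq_default _ _ (digits_length_le hr h)]

lemma sum_lt_pow {r N : ℕ} (hr : 2 ≤ r) (c : ℕ → ℕ) (hc : ∀ k, c k < r) :
    ∑ k ∈ Finset.range N, c k * r ^ k < r ^ N := by
  induction N with
  | zero => simp
  | succ N ih =>
    rw [Finset.sum_range_succ, pow_succ]
    have h1 : c N * r ^ N ≤ (r - 1) * r ^ N :=
      Nat.mul_le_mul_right _ (by have := hc N; omega)
    have h2 : 0 < r ^ N := Nat.pow_pos (by omega)
    have hrr : 1 + (r - 1) = r := by omega
    have : r ^ N + (r - 1) * r ^ N = r ^ N * r := by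
      calc r ^ N + (r - 1) * r ^ N = (1 + (r - 1)) * r ^ N := by ring
      _ = r * r ^ N := by rw [hrr]
      _ = r ^ N * r := by ring
    omega

lemma baseR_unique {r : ℕ} (hr : 2 ≤ r) :
    ∀ N (c d : ℕ → ℕ), (∀ k, c k < r) → (∀ k, d k < r) →
      (∑ k ∈ Finset.range N, c k * r ^ k = ∑ k ∈ Finset.range N, d k * r ^ k) →
      ∀ j < N, c j = d j := by
  intro N
  induction N with
  | zero => intro c d _ _ _ j hj; omega
  | succ N ih =>
    intro c d hc hd hsum j hj
    have hre : ∀ (e : ℕ → ℕ), ∑ k ∈ Finset.range (N + 1), e k * r ^ k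
        = r * (∑ k ∈ Finset.range N, e (k + 1) * r ^ k) + e 0 := by
      intro e
      rw [Finset.sum_range_succ', pow_zero, mul_one, Finset.mul_sum]
      congr 1
      apply Finset.sum_congr rfl
      intro k _
      ring
    rw [hre c, hre d] at hsum
    have h0 : c 0 = d 0 := by
      have e1 : (r * (∑ k ∈ Finset.range N, c (k + 1) * r ^ k) + c 0) % r = c 0 := by
        rw [Nat.add_comm, Nat.add_mul_mod_self_left, Nat.mod_eq_of_lt (hc 0)]
      have e2 : (r * (∑ k ∈ Finset.range N, d (k + 1) * r ^ k) + d 0) % r = d 0 := by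
        rw [Nat.add_comm, Nat.add_mul_mod_self_left, Nat.mod_eq_of_lt (hd 0)]
      rw [← e1, ← e2, hsum]
    have htail : ∑ k ∈ Finset.range N, c (k + 1) * r ^ k
        = ∑ k ∈ Finset.range N, d (k + 1) * r ^ k := by
      have e1 : (r * (∑ k ∈ Finset.range N, c (k + 1) * r ^ k) + c 0) / r
          = ∑ k ∈ Finset.range N, c (k + 1) * r ^ k := by
        rw [Nat.add_comm, Nat.add_mul_div_left _ _ (by omega : 0 < r),
          Nat.div_eq_of_lt (hc 0)]
        omega
      have e2 : (r * (∑ k ∈ Finset.range N, d (k + 1) * r ^ k) + d 0) / r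
          = ∑ k ∈ Finset.range N, d (k + 1) * r ^ k := by
        rw [Nat.add_comm, Nat.add_mul_div_left _ _ (by omega : 0 < r),
          Nat.div_eq_of_lt (hd 0)]
        omega
      rw [← e1, ← e2, hsum]
    rcases Nat.eq_zero_or_pos j with rfl | hjpos
    · exact h0
    · obtain ⟨j', rfl⟩ := Nat.exists_eq_add_of_le hjpos
      have := ih (fun k => c (k + 1)) (fun k => d (k + 1)) (fun k => hc (k + 1))
        (fun k => hd (k + 1)) htail j' (by omega)
      simpa [Nat.add_comm] using this

lemma dg_of_sum {r N : ℕ} (hr : 2 ≤ r) (c : ℕ → ℕ) (hc : ∀ k, c k < r) {j : ℕ} (hj : j < N) :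
    dg r j (∑ k ∈ Finset.range N, c k * r ^ k) = c j := by
  set V := ∑ k ∈ Finset.range N, c k * r ^ k with hV
  have hVlt : V < r ^ N := sum_lt_pow hr c hc
  have h1 : ∑ k ∈ Finset.range N, dg r k V * r ^ k = V := dg_sum hr hVlt
  exact baseR_unique hr N (fun k => dg r k V) c (fun k => dg_lt hr k V) hc (h1.trans hV) j hj

lemma msum_range (N : ℕ) (f : ℕ → ℕ) :
    ((Multiset.range N).map f).sum = ∑ j ∈ Finset.range N, f j := rfl

lemma sum_dedup_mul_count (s : Multiset ℕ) :
    (s.dedup.map (fun a => a * s.count a)).sum = s.sum := by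
  have h1 : (s.dedup.map (fun a => a * s.count a)).sum
      = ∑ a ∈ s.toFinset, a * s.count a := rfl
  rw [h1]
  have h2 := Finset.sum_multiset_map_count s (fun a => a)
  have h3 : (s.map (fun a => a)).sum = s.sum := by simp
  rw [h3] at h2
  rw [h2]
  apply Finset.sum_congr rfl
  intro a _
  rw [smul_eq_mul]
  ring

/-- Inverse Glaisher map: part `a` with multiplicity `m` becomes `digit_j(m)` copies
of `a * r^j` for each `j`. -/
def invGl (r : ℕ) {n : ℕ} (hr : 2 ≤ r) (q : n.Partition) : n.Partition where
  parts := q.parts.dedup.bind (fun a =>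
    (Multiset.range (Nat.digits r (q.parts.count a)).length).bind
      (fun j => Multiset.replicate (dg r j (q.parts.count a)) (a * r ^ j)))
  parts_pos := by
    intro x hx
    rw [Multiset.mem_bind] at hx
    obtain ⟨a, ha, hx⟩ := hx
    rw [Multiset.mem_bind] at hx
    obtain ⟨j, hj, hx⟩ := hx
    rw [Multiset.eq_of_mem_replicate hx]
    have ha1 : 0 < a := q.parts_pos (Multiset.mem_dedup.1 ha)
    have : 0 < r ^ j := Nat.pow_pos (by omega)
    positivity
  parts_sum := by
    rw [msum_bind]
    have hinner : ∀ a ∈ q.parts.dedup,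
        ((Multiset.range (Nat.digits r (q.parts.count a)).length).bind
          (fun j => Multiset.replicate (dg r j (q.parts.count a)) (a * r ^ j))).sum
        = a * q.parts.count a := by
      intro a _
      rw [msum_bind]
      have : ∀ j, (Multiset.replicate (dg r j (q.parts.count a)) (a * r ^ j)).sum
          = dg r j (q.parts.count a) * (a * r ^ j) := by
        intro j
        rw [Multiset.sum_replicate, smul_eq_mul]
      rw [Multiset.map_congr rfl (fun j _ => this j), msum_range]
      have hlen : ∑ j ∈ Finset.range (Nat.digits r (q.parts.count a)).length,
          dg r j (q.parts.count a) * (a * r ^ j)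
          = a * ∑ j ∈ Finset.range (Nat.digits r (q.parts.count a)).length,
              dg r j (q.parts.count a) * r ^ j := by
        rw [Finset.mul_sum]
        apply Finset.sum_congr rfl
        intro j _
        ring
      rw [hlen]
      congr 1
      exact dg_sum hr (Nat.lt_base_pow_length_digits (by omega))
    rw [Multiset.map_congr rfl hinner, sum_dedup_mul_count, q.parts_sum]

lemma count_invGl {r n : ℕ} (hr : 2 ≤ r) {q : n.Partition} (hq : IsRegular r q)
    {b : ℕ} (hb : ¬ r ∣ b) (j : ℕ) :
    Multiset.count (b * r ^ j) (invGl r hr q).parts = dg r j (q.parts.count b) := by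
  have hb0 : 0 < b := by
    rcases Nat.eq_zero_or_pos b with rfl | h
    · exact absurd (dvd_zero r) hb
    · exact h
  rw [invGl, Multiset.count_bind]
  have hinner : ∀ a ∈ q.parts.dedup,
      Multiset.count (b * r ^ j)
        ((Multiset.range (Nat.digits r (q.parts.count a)).length).bind
          (fun j' => Multiset.replicate (dg r j' (q.parts.count a)) (a * r ^ j')))
      = if a = b then dg r j (q.parts.count a) else 0 := by
    intro a ha
    have hamem : a ∈ q.parts := Multiset.mem_dedup.1 ha
    have hra : ¬ r ∣ a := hq a hamem
    have ha0 : 0 < a := q.parts_pos hamem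
    rw [Multiset.count_bind]
    have hcnt : ∀ j', Multiset.count (b * r ^ j)
        (Multiset.replicate (dg r j' (q.parts.count a)) (a * r ^ j'))
        = if a * r ^ j' = b * r ^ j then dg r j' (q.parts.count a) else 0 :=
      fun j' => Multiset.count_replicate _ _ _
    rw [Multiset.map_congr rfl (fun j' _ => hcnt j'), msum_range]
    by_cases hab : a = b
    · subst hab
      have hcond : ∀ j', (a * r ^ j' = a * r ^ j) ↔ (j' = j) := by
        intro j'
        constructor
        · intro h
          have := Nat.eq_of_mul_eq_mul_left ha0 h
          exact Nat.pow_right_injective hr this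
        · intro h; rw [h]
      rw [if_pos rfl]
      have : ∀ j' ∈ Finset.range (Nat.digits r (q.parts.count a)).length,
          (if a * r ^ j' = a * r ^ j then dg r j' (q.parts.count a) else 0)
          = (if j' = j then dg r j' (q.parts.count a) else 0) := by
        intro j' _
        rw [if_congr (hcond j') rfl rfl]
      rw [Finset.sum_congr rfl this, Finset.sum_ite_eq' _ j (fun j' => dg r j' (q.parts.count a))]
      by_cases hjl : j ∈ Finset.range (Nat.digits r (q.parts.count a)).length
      · rw [if_pos hjl]
      · rw [if_neg hjl]
        rw [Finset.mem_range] at hjl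
        rw [dg, List.getD_eq_default _ _ (by omega)]
    · rw [if_neg hab]
      apply Finset.sum_eq_zero
      intro j' _
      rw [if_neg]
      intro hcon
      apply hab
      have h1 : r.maxPowDiv (b * r ^ j) = j := maxPowDiv_mul_pow hr hb
      have h2 : r.maxPowDiv (a * r ^ j') = j' := maxPowDiv_mul_pow hr hra
      have hjj : j' = j := by rw [← h1, ← h2, hcon]
      subst hjj
      have := Nat.eq_of_mul_eq_mul_right (Nat.pow_pos (n := j') (by omega : 0 < r)) hcon
      omega
  rw [Multiset.map_congr rfl hinner]
  have : ∀ a, (if a = b then dg r j (q.parts.count a) else 0)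
      = (if a = b then dg r j (q.parts.count b) else 0) := by
    intro a
    by_cases h : a = b
    · rw [if_pos h, if_pos h, h]
    · rw [if_neg h, if_neg h]
  rw [Multiset.map_congr rfl (fun a _ => this a), sum_map_ite_eq, Multiset.count_dedup]
  by_cases hmem : b ∈ q.parts
  · rw [if_pos hmem, mul_one]
  · rw [if_neg hmem, mul_zero, Multiset.count_eq_zero_of_notMem hmem]
    simp [dg]

lemma invGl_restricted {r n : ℕ} (hr : 2 ≤ r) {q : n.Partition} (hq : IsRegular r q) :
    IsRestricted r (invGl r hr q) := by
  intro s
  rcases Nat.eq_zero_or_pos s with rfl | hs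
  · rw [Multiset.count_eq_zero_of_notMem]
    · omega
    · intro h0; exact absurd ((invGl r hr q).parts_pos h0) (by omega)
  · have hb : ¬ r ∣ s / r ^ r.maxPowDiv s := not_dvd_div_maxPowDiv hr (by omega)
    have hbj : s / r ^ r.maxPowDiv s * r ^ r.maxPowDiv s = s := div_pow_maxPowDiv_mul
    rw [← hbj, count_invGl hr hq hb]
    have := dg_lt hr (r.maxPowDiv s) (q.parts.count (s / r ^ r.maxPowDiv s))
    omega

lemma card_le_sum_nat (s : Multiset ℕ) (h : ∀ x ∈ s, 1 ≤ x) :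
    Multiset.card s ≤ s.sum := by
  induction s using Multiset.induction_on with
  | empty => simp
  | cons a s ih =>
    rw [Multiset.card_cons, Multiset.sum_cons]
    have h1 := h a (Multiset.mem_cons_self a s)
    have h2 := ih (fun x hx => h x (Multiset.mem_cons_of_mem hx))
    omega

lemma count_le_n {n : ℕ} (q : n.Partition) (s : ℕ) : q.parts.count s ≤ n := by
  calc q.parts.count s ≤ Multiset.card q.parts := Multiset.count_le_card _ _
  _ ≤ q.parts.sum := card_le_sum_nat _ (fun x hx => q.parts_pos hx)
  _ = n := q.parts_sum

lemma n_lt_pow {r n : ℕ} (hr : 2 ≤ r) : n < r ^ (n + 1) := by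
  calc n < 2 ^ n := Nat.lt_two_pow_self
  _ ≤ 2 ^ (n + 1) := Nat.pow_le_pow_right (by omega) (by omega)
  _ ≤ r ^ (n + 1) := Nat.pow_le_pow_left hr _

lemma maxPowDiv_eq_zero {r s : ℕ} (h : ¬ r ∣ s) : r.maxPowDiv s = 0 := by
  by_contra hc
  apply h
  have : r ^ 1 ∣ s := dvd_trans (pow_dvd_pow r (by omega : 1 ≤ r.maxPowDiv s)) (Nat.maxPowDiv.pow_dvd (p := r) (n := s))
  rwa [pow_one] at this

lemma gl_invGl {r n : ℕ} (hr : 2 ≤ r) {q : n.Partition} (hq : IsRegular r q) :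
    gl r (invGl r hr q) = q := by
  apply Nat.Partition.ext
  apply Multiset.ext.2
  intro s
  rcases Nat.eq_zero_or_pos s with rfl | hs
  · rw [Multiset.count_eq_zero_of_notMem, Multiset.count_eq_zero_of_notMem]
    · intro h0; exact absurd (q.parts_pos h0) (by omega)
    · intro h0; exact absurd ((gl r (invGl r hr q)).parts_pos h0) (by omega)
  · by_cases hrs : r ∣ s
    · rw [Multiset.count_eq_zero_of_notMem, Multiset.count_eq_zero_of_notMem]
      · intro h0; exact hq s h0 hrs
      · intro h0; exact gl_regular hr (invGl r hr q) s h0 hrs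
    · have hJ : ∀ x ∈ (invGl r hr q).parts, x < r ^ (n + 1) := by
        intro x hx
        have := parts_le_n _ hx
        have := n_lt_pow (n := n) hr
        omega
      rw [count_gl hr _ hrs hJ]
      have hcnt : ∀ k, Multiset.count (s * r ^ k) (invGl r hr q).parts
          = dg r k (q.parts.count s) := fun k => count_invGl hr hq hrs k
      rw [Finset.sum_congr rfl (fun k _ => by rw [hcnt k])]
      rw [Finset.sum_congr rfl (fun k _ => mul_comm (r ^ k) (dg r k (q.parts.count s)))]
      apply dg_sum hr
      have := count_le_n q s
      have := n_lt_pow (n := n) hr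
      omega

lemma invGl_gl {r n : ℕ} (hr : 2 ≤ r) {p : n.Partition} (hp : IsRestricted r p) :
    invGl r hr (gl r p) = p := by
  apply Nat.Partition.ext
  apply Multiset.ext.2
  intro s
  rcases Nat.eq_zero_or_pos s with rfl | hs
  · rw [Multiset.count_eq_zero_of_notMem, Multiset.count_eq_zero_of_notMem]
    · intro h0; exact absurd (p.parts_pos h0) (by omega)
    · intro h0; exact absurd ((invGl r hr (gl r p)).parts_pos h0) (by omega)
  · set v := r.maxPowDiv s with hv
    set b := s / r ^ v with hbdef
    have hb : ¬ r ∣ b := not_dvd_div_maxPowDiv hr (by omega)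
    have hbj : b * r ^ v = s := div_pow_maxPowDiv_mul
    have hJ : ∀ x ∈ p.parts, x < r ^ (n + 1) := by
      intro x hx
      have := parts_le_n _ hx
      have := n_lt_pow (n := n) hr
      omega
    have hkey : Multiset.count b (gl r p).parts
        = ∑ k ∈ Finset.range (n + 1), (p.parts.count (b * r ^ k)) * r ^ k := by
      rw [count_gl hr _ hb hJ]
      exact Finset.sum_congr rfl (fun k _ => mul_comm _ _)
    have hclt : ∀ k, p.parts.count (b * r ^ k) < r := by
      intro k
      have := hp (b * r ^ k)
      omega
    rw [← hbj, count_invGl hr (gl_regular hr p) hb, hkey]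
    by_cases hjn : v < n + 1
    · exact dg_of_sum hr _ hclt hjn
    · have h1 : r ^ (n + 1) ≤ r ^ v := Nat.pow_le_pow_right (by omega) (by omega)
      have hV : ∑ k ∈ Finset.range (n + 1), (p.parts.count (b * r ^ k)) * r ^ k < r ^ v := by
        have := sum_lt_pow (N := n + 1) hr _ hclt
        omega
      rw [dg_eq_zero_of_lt hr hV]
      symm
      rw [Multiset.count_eq_zero_of_notMem]
      intro hmem
      have h2 : b * r ^ v ≤ n := parts_le_n _ hmem
      have hb0 : 0 < b := by
        rcases Nat.eq_zero_or_pos b with h | h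
        · rw [h] at hb; exact absurd (dvd_zero r) hb
        · exact h
      have h3 : r ^ v ≤ b * r ^ v := Nat.le_mul_of_pos_left _ hb0
      have := n_lt_pow (n := n) hr
      omega

def copyP {m m' : ℕ} (h : m = m') (q : m.Partition) : m'.Partition where
  parts := q.parts
  parts_pos := fun hi => q.parts_pos hi
  parts_sum := by rw [q.parts_sum, h]

@[simp] lemma copyP_parts {m m' : ℕ} (h : m = m') (q : m.Partition) :
    (copyP h q).parts = q.parts := rfl

def insertP (i : ℕ) {m : ℕ} (hi : 0 < i) (q : m.Partition) : (i + m).Partition where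
  parts := i ::ₘ q.parts
  parts_pos := by
    intro x hx
    rcases Multiset.mem_cons.1 hx with h | h
    · subst h; exact hi
    · exact q.parts_pos h
  parts_sum := by rw [Multiset.sum_cons, q.parts_sum]

@[simp] lemma insertP_parts (i : ℕ) {m : ℕ} (hi : 0 < i) (q : m.Partition) :
    (insertP i hi q).parts = i ::ₘ q.parts := rfl

def eraseP {m : ℕ} (q : m.Partition) (s : ℕ) (hs : s ∈ q.parts) : (m - s).Partition where
  parts := q.parts.erase s
  parts_pos := fun hi => q.parts_pos (Multiset.mem_of_mem_erase hi)
  parts_sum := by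
    have h1 : s ::ₘ q.parts.erase s = q.parts := Multiset.cons_erase hs
    have h2 := congrArg Multiset.sum h1
    rw [Multiset.sum_cons, q.parts_sum] at h2
    omega

@[simp] lemma eraseP_parts {m : ℕ} (q : m.Partition) (s : ℕ) (hs : s ∈ q.parts) :
    (eraseP q s hs).parts = q.parts.erase s := rfl

def mainEquiv (n r : ℕ) (hr : 2 ≤ r) :
    {x : Σ m : ℕ, m.Partition × ℕ //
      IsFlat r x.2.1 ∧ 1 ≤ x.2.2 ∧ ¬ r ∣ x.2.2 ∧ x.1 + x.2.2 = n} ≃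
    {y : Σ _ : n.Partition, ℕ //
      y ∈ (Finset.univ.filter (fun p : n.Partition => IsRegular r p)).sigma
        (fun p => p.parts.toFinset)} where
  toFun x := ⟨⟨copyP (by obtain ⟨-, -, -, h4⟩ := x.2; omega)
      (insertP x.1.2.2 (x.2.2.1) (gl r (conj x.1.2.1))), x.1.2.2⟩, by
    apply Finset.mem_sigma.2
    constructor
    · apply Finset.mem_filter.2
      refine ⟨Finset.mem_univ _, ?_⟩
      intro y hy
      rw [copyP_parts, insertP_parts] at hy
      rcases Multiset.mem_cons.1 hy with h | h
      · subst h; exact x.2.2.2.1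
      · exact gl_regular hr _ y h
    · apply Multiset.mem_toFinset.2
      rw [copyP_parts, insertP_parts]
      exact Multiset.mem_cons_self _ _⟩
  invFun y := ⟨⟨n - y.1.2,
      (conj (invGl r hr (eraseP y.1.1 y.1.2
        (Multiset.mem_toFinset.1 (Finset.mem_sigma.1 y.2).2))), y.1.2)⟩, by
    have hmem : y.1.2 ∈ y.1.1.parts :=
      Multiset.mem_toFinset.1 (Finset.mem_sigma.1 y.2).2
    have hreg : IsRegular r y.1.1 :=
      (Finset.mem_filter.1 (Finset.mem_sigma.1 y.2).1).2
    have hregE : IsRegular r (eraseP y.1.1 y.1.2 hmem) := by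
      intro z hz
      rw [eraseP_parts] at hz
      exact hreg z (Multiset.mem_of_mem_erase hz)
    refine ⟨restricted_iff_flat_conj.1 (invGl_restricted hr hregE),
      y.1.1.parts_pos hmem, hreg _ hmem, ?_⟩
    have := parts_le_n y.1.1 hmem
    dsimp only
    omega⟩
  left_inv := by
    rintro ⟨⟨m, μ, i⟩, h1, h2, h3, h4⟩
    dsimp only at h1 h2 h3 h4
    have hm : m = n - i := by omega
    subst hm
    apply Subtype.ext
    dsimp only
    have hrest : IsRestricted r (conj μ) := flat_iff_restricted_conj.1 h1
    have herase : ∀ (hmem : i ∈ (copyP (by omega : i + (n - i) = n)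
        (insertP i h2 (gl r (conj μ)))).parts),
        eraseP _ i hmem = gl r (conj μ) := by
      intro hmem
      apply Nat.Partition.ext
      rw [eraseP_parts, copyP_parts, insertP_parts]
      exact Multiset.erase_cons_head i _
    refine congrArg (fun z => (⟨n - i, z⟩ : Σ m : ℕ, m.Partition × ℕ)) ?_
    refine Prod.ext ?_ rfl
    dsimp only
    rw [herase _, invGl_gl hr hrest, conj_conj]
  right_inv := by
    rintro ⟨⟨p, s⟩, hy⟩
    have hmem : s ∈ p.parts := Multiset.mem_toFinset.1 (Finset.mem_sigma.1 hy).2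
    have hreg : IsRegular r p := (Finset.mem_filter.1 (Finset.mem_sigma.1 hy).1).2
    have hregE : IsRegular r (eraseP p s hmem) := by
      intro z hz
      rw [eraseP_parts] at hz
      exact hreg z (Multiset.mem_of_mem_erase hz)
    apply Subtype.ext
    dsimp only
    have hstep : ∀ (pf : s + (n - s) = n),
        copyP pf (insertP s (p.parts_pos hmem) (gl r (conj (conj (invGl r hr
          (eraseP p s hmem)))))) = p := by
      intro pf
      apply Nat.Partition.ext
      rw [copyP_parts, insertP_parts, conj_conj, gl_invGl hr hregE, eraseP_parts]
      exact Multiset.cons_erase hmem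
    rw [hstep _]

theorem dist_regular_eq_pairs (n r : ℕ) (hr : 2 ≤ r) :
    (∑ p ∈ Finset.univ.filter (fun p : n.Partition => IsRegular r p), lDist p) =
      Nat.card {x : Σ m : ℕ, m.Partition × ℕ //
        IsFlat r x.2.1 ∧ 1 ≤ x.2.2 ∧ ¬ r ∣ x.2.2 ∧ x.1 + x.2.2 = n} := by
  rw [Nat.card_congr (mainEquiv n r hr), Nat.card_eq_finsetCard, Finset.card_sigma]
  rfl

end BeckPaper
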